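/- Let K be a field, k a natural number, and V : Fin k → Type a family of K-vector spaces. For a finite subset A : Finset (Fin k), set T_A(V) := ⨁_{e : Fin A.card ≃ A} ⨂_{j : Fin A.card} V(e j), the direct sum over all orderings e of A of the tensor products of the V's along that ordering, and let T(V) := ⨁_{σ : Equiv.Perm (Fin k)} ⨂_{i : Fin k} V(σ i). Then there is a K-linear equivalence ⨁_{A : Finset (Fin k)} (T_A(V) ⊗[K] T_{Aᶜ}(V)) ≃ (Fin (k+1) → T(V)); that is, the direct sum over all subsets A of Fin k of T_A(V) ⊗ T_{Aᶜ}(V) is isomorphic to the direct sum of (k+1) copies of T(V). -/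

import Mathlib

open scoped TensorProduct DirectSum
open PiTensorProduct Function

noncomputable section DepTmul

set_option linter.unusedSectionVars false

variable {R : Type*} [CommSemiring R] {ι₁ ι₂ : Type*}
  (N : ι₁ ⊕ ι₂ → Type*) [∀ s, AddCommMonoid (N s)] [∀ s, Module R (N s)]

variable {N} in
private lemma sumRec_update_left [DecidableEq ι₁] [DecidableEq (ι₁ ⊕ ι₂)]
    (x : ∀ j, N (.inl j)) (y : ∀ j, N (.inr j)) (i : ι₁) (v : N (.inl i)) :
    (fun s => Sum.rec (Function.update x i v) y s : ∀ s, N s)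
      = Function.update (fun s => Sum.rec x y s) (Sum.inl i) v := by
  funext s
  cases s with
  | inl j =>
    rcases eq_or_ne j i with rfl | h
    · simp
    · show Function.update x i v j = _
      rw [Function.update_of_ne h, Function.update_of_ne (by simpa using h)]
  | inr j =>
    show y j = _
    rw [Function.update_of_ne (by simp)]

variable {N} in
private lemma sumRec_update_right [DecidableEq ι₂] [DecidableEq (ι₁ ⊕ ι₂)]
    (x : ∀ j, N (.inl j)) (y : ∀ j, N (.inr j)) (i : ι₂) (v : N (.inr i)) :
    (fun s => Sum.rec x (Function.update y i v) s : ∀ s, N s)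
      = Function.update (fun s => Sum.rec x y s) (Sum.inr i) v := by
  funext s
  cases s with
  | inr j =>
    rcases eq_or_ne j i with rfl | h
    · simp
    · show Function.update y i v j = _
      rw [Function.update_of_ne h, Function.update_of_ne (by simpa using h)]
  | inl j =>
    show x j = _
    rw [Function.update_of_ne (by simp)]

variable [DecidableEq ι₁] [DecidableEq ι₂]

private def depML : MultilinearMap R (fun j : ι₁ => N (.inl j))
    (MultilinearMap R (fun j : ι₂ => N (.inr j)) (⨂[R] s, N s)) where
  toFun x :=
    { toFun := fun y => tprod R (fun s => Sum.rec x y s)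
      map_update_add' := fun y i a b => by
        rw [sumRec_update_right, sumRec_update_right, sumRec_update_right,
          MultilinearMap.map_update_add]
      map_update_smul' := fun y i c a => by
        rw [sumRec_update_right, sumRec_update_right, MultilinearMap.map_update_smul] }
  map_update_add' := fun x i a b => by
    ext y
    simp only [MultilinearMap.coe_mk, MultilinearMap.add_apply]
    rw [sumRec_update_left, sumRec_update_left, sumRec_update_left,
      MultilinearMap.map_update_add]
  map_update_smul' := fun x i c a => by
    ext y
    simp only [MultilinearMap.coe_mk, MultilinearMap.smul_apply]
    rw [sumRec_update_left, sumRec_update_left, MultilinearMap.map_update_smul]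

private lemma depML_apply (x : ∀ j, N (.inl j)) (y : ∀ j, N (.inr j)) :
    depML N x y = tprod R (fun s => Sum.rec x y s) := rfl

private def depFwd :
    ((⨂[R] j : ι₁, N (.inl j)) ⊗[R] (⨂[R] j : ι₂, N (.inr j))) →ₗ[R] ⨂[R] s, N s :=
  TensorProduct.lift
    ((PiTensorProduct.lift :
        MultilinearMap R (fun j : ι₂ => N (.inr j)) (⨂[R] s, N s) ≃ₗ[R] _).toLinearMap
      ∘ₗ (PiTensorProduct.lift (depML N)))

private lemma depFwd_tprod (x : ∀ j, N (.inl j)) (y : ∀ j, N (.inr j)) :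
    depFwd N ((tprod R x) ⊗ₜ[R] (tprod R y)) = tprod R (fun s => Sum.rec x y s) := by
  simp only [depFwd, TensorProduct.lift.tmul, LinearMap.comp_apply,
    LinearEquiv.coe_toLinearMap, PiTensorProduct.lift.tprod]
  rw [depML_apply]

private def depBwdML :
    MultilinearMap R N ((⨂[R] j : ι₁, N (.inl j)) ⊗[R] (⨂[R] j : ι₂, N (.inr j))) where
  toFun z := (tprod R fun j => z (.inl j)) ⊗ₜ[R] (tprod R fun j => z (.inr j))
  map_update_add' := fun z s a b => by
    cases s with
    | inl i =>
      have h₁ : ∀ v : N (.inl i), (fun j : ι₁ => Function.update z (Sum.inl i) v (Sum.inl j))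
          = Function.update (fun j : ι₁ => z (.inl j)) i v := by
        intro v; funext j
        rcases eq_or_ne j i with rfl | h
        · simp
        · rw [Function.update_of_ne (by simpa using h), Function.update_of_ne h]
      have h₂ : ∀ v : N (.inl i), (fun j : ι₂ => Function.update z (Sum.inl i) v (Sum.inr j))
          = fun j : ι₂ => z (.inr j) := by
        intro v; funext j; rw [Function.update_of_ne (by simp)]
      simp only [h₁, h₂, MultilinearMap.map_update_add, TensorProduct.add_tmul]
    | inr i =>
      have h₁ : ∀ v : N (.inr i), (fun j : ι₁ => Function.update z (Sum.inr i) v (Sum.inl j))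
          = fun j : ι₁ => z (.inl j) := by
        intro v; funext j; rw [Function.update_of_ne (by simp)]
      have h₂ : ∀ v : N (.inr i), (fun j : ι₂ => Function.update z (Sum.inr i) v (Sum.inr j))
          = Function.update (fun j : ι₂ => z (.inr j)) i v := by
        intro v; funext j
        rcases eq_or_ne j i with rfl | h
        · simp
        · rw [Function.update_of_ne (by simpa using h), Function.update_of_ne h]
      simp only [h₁, h₂, MultilinearMap.map_update_add, TensorProduct.tmul_add]
  map_update_smul' := fun z s c a => by
    cases s with
    | inl i =>
      have h₁ : ∀ v : N (.inl i), (fun j : ι₁ => Function.update z (Sum.inl i) v (Sum.inl j))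
          = Function.update (fun j : ι₁ => z (.inl j)) i v := by
        intro v; funext j
        rcases eq_or_ne j i with rfl | h
        · simp
        · rw [Function.update_of_ne (by simpa using h), Function.update_of_ne h]
      have h₂ : ∀ v : N (.inl i), (fun j : ι₂ => Function.update z (Sum.inl i) v (Sum.inr j))
          = fun j : ι₂ => z (.inr j) := by
        intro v; funext j; rw [Function.update_of_ne (by simp)]
      simp only [h₁, h₂, MultilinearMap.map_update_smul, TensorProduct.smul_tmul']
    | inr i =>
      have h₁ : ∀ v : N (.inr i), (fun j : ι₁ => Function.update z (Sum.inr i) v (Sum.inl j))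
          = fun j : ι₁ => z (.inl j) := by
        intro v; funext j; rw [Function.update_of_ne (by simp)]
      have h₂ : ∀ v : N (.inr i), (fun j : ι₂ => Function.update z (Sum.inr i) v (Sum.inr j))
          = Function.update (fun j : ι₂ => z (.inr j)) i v := by
        intro v; funext j
        rcases eq_or_ne j i with rfl | h
        · simp
        · rw [Function.update_of_ne (by simpa using h), Function.update_of_ne h]
      simp only [h₁, h₂, MultilinearMap.map_update_smul, TensorProduct.tmul_smul]

attribute [local ext] TensorProduct.ext

/-- Dependent version of `PiTensorProduct.tmulEquiv`. -/
def depTmulEquiv :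
    ((⨂[R] j : ι₁, N (.inl j)) ⊗[R] (⨂[R] j : ι₂, N (.inr j))) ≃ₗ[R] ⨂[R] s, N s :=
  LinearEquiv.ofLinear (depFwd N) (PiTensorProduct.lift (depBwdML N))
    (by
      ext z
      simp only [LinearMap.compMultilinearMap_apply, LinearMap.comp_apply,
        LinearMap.id_apply, PiTensorProduct.lift.tprod]
      have hb : depBwdML N z
          = (PiTensorProduct.tprod R fun j => z (.inl j)) ⊗ₜ[R] (PiTensorProduct.tprod R fun j => z (.inr j)) := rfl
      rw [hb, depFwd_tprod]
      congr 1
      funext s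
      cases s <;> rfl)
    (by
      ext x y
      simp only [LinearMap.compMultilinearMap_apply, LinearMap.comp_apply,
        TensorProduct.AlgebraTensorModule.curry_apply, TensorProduct.curry_apply,
        LinearMap.coe_restrictScalars, LinearMap.id_apply]
      rw [depFwd_tprod, PiTensorProduct.lift.tprod]
      rfl)

end DepTmul


noncomputable section

/-- Congruence of direct sums along an index equivalence with summand equivalences. -/
def dsCongr {R : Type*} [Semiring R] {ι κ : Type*} {M : ι → Type*} {N : κ → Type*}
    [∀ i, AddCommMonoid (M i)] [∀ i, Module R (M i)]
    [∀ j, AddCommMonoid (N j)] [∀ j, Module R (N j)]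
    (h : ι ≃ κ) (φ : ∀ i, M i ≃ₗ[R] N (h i)) :
    (⨁ i, M i) ≃ₗ[R] ⨁ j, N j :=
  (DFinsupp.mapRange.linearEquiv φ).trans
    ((DirectSum.lequivCongrLeft R h.symm : (⨁ j, N j) ≃ₗ[R] ⨁ i, N (h i))).symm

section Comb

variable {k : ℕ} (A : Finset (Fin k))

lemma cardsum : A.card + Aᶜ.card = k := by
  simpa using Finset.card_add_card_compl A

/-- ordering equiv -/
def gA : Fin A.card ⊕ Fin Aᶜ.card ≃ Fin k :=
  finSumFinEquiv.trans (finCongr (cardsum A))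

def cA : {x // x ∈ A} ⊕ {x // x ∈ Aᶜ} ≃ Fin k :=
  (Equiv.sumCongr (Equiv.refl _) (Equiv.subtypeEquivRight (fun x => Finset.mem_compl))).trans
    (Equiv.sumCompl (fun x => x ∈ A))

variable {A}
variable (e : Fin A.card ≃ {x // x ∈ A}) (f : Fin Aᶜ.card ≃ {x // x ∈ Aᶜ})

def sigmaAEF : Equiv.Perm (Fin k) :=
  (gA A).symm.trans ((e.sumCongr f).trans (cA A))

lemma sigmaAEF_gA (s : Fin A.card ⊕ Fin Aᶜ.card) :
    sigmaAEF e f (gA A s) = cA A ((e.sumCongr f) s) := by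
  simp [sigmaAEF]

lemma sigmaAEF_inl (j : Fin A.card) : sigmaAEF e f (gA A (Sum.inl j)) = (e j).1 := by
  rw [sigmaAEF_gA]; rfl

lemma sigmaAEF_inr (j : Fin Aᶜ.card) : sigmaAEF e f (gA A (Sum.inr j)) = (f j).1 := by
  rw [sigmaAEF_gA]; rfl

lemma gA_inl_val (j : Fin A.card) : (gA A (Sum.inl j)).val = j.val := by
  simp [gA]

lemma gA_inr_val (j : Fin Aᶜ.card) : (gA A (Sum.inr j)).val = A.card + j.val := by
  simp [gA]

lemma mem_iff_symm_lt (x : Fin k) :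
    x ∈ A ↔ ((sigmaAEF e f).symm x).val < A.card := by
  constructor
  · intro hx
    have h1 : sigmaAEF e f (gA A (Sum.inl (e.symm ⟨x, hx⟩))) = x := by
      rw [sigmaAEF_inl]; simp
    have := congrArg (fun y => ((sigmaAEF e f).symm y).val) h1
    simp only [Equiv.symm_apply_apply] at this
    rw [← this, gA_inl_val]
    exact (e.symm ⟨x, hx⟩).isLt
  · intro hx
    set c := (sigmaAEF e f).symm x with hc
    have hcx : sigmaAEF e f c = x := by rw [hc]; simp
    obtain ⟨s, hs⟩ : ∃ s, gA A s = c := ⟨(gA A).symm c, by simp⟩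
    cases s with
    | inl j =>
      rw [← hs, sigmaAEF_inl] at hcx
      rw [← hcx]; exact (e j).2
    | inr j =>
      exfalso
      have := gA_inr_val (A := A) j
      rw [hs] at this
      omega

end Comb

section Phi

variable (k : ℕ)

abbrev Lam := Σ A : Finset (Fin k), (Fin A.card ≃ {x // x ∈ A}) × (Fin Aᶜ.card ≃ {x // x ∈ Aᶜ})

def Fmap : Lam k → Fin (k + 1) × Equiv.Perm (Fin k) :=
  fun q => (⟨q.1.card, Nat.lt_succ_of_le (by simpa using Finset.card_le_univ q.1)⟩,
    sigmaAEF q.2.1 q.2.2)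

lemma Fmap_injective : Function.Injective (Fmap k) := by
  rintro ⟨A, e, f⟩ ⟨B, e', f'⟩ h
  obtain ⟨h1, h2⟩ := Prod.mk.injEq _ _ _ _ ▸ h
  have hcard : A.card = B.card := congrArg Fin.val h1
  have hAB : A = B := by
    ext x
    rw [mem_iff_symm_lt e f, mem_iff_symm_lt e' f', h2, hcard]
  subst hAB
  have he : e = e' := by
    apply Equiv.ext; intro j
    apply Subtype.ext
    rw [← sigmaAEF_inl e f, ← sigmaAEF_inl e' f', h2]
  have hf : f = f' := by
    apply Equiv.ext; intro j
    apply Subtype.ext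
    rw [← sigmaAEF_inr e f, ← sigmaAEF_inr e' f', h2]
  rw [he, hf]

lemma card_Lam : Fintype.card (Lam k) = (k + 1) * Nat.factorial k := by
  have step : ∀ A : Finset (Fin k),
      Fintype.card ((Fin A.card ≃ {x // x ∈ A}) × (Fin Aᶜ.card ≃ {x // x ∈ Aᶜ}))
        = Nat.factorial A.card * Nat.factorial (k - A.card) := by
    intro A
    rw [Fintype.card_prod]
    have h1 : Fintype.card (Fin A.card ≃ {x // x ∈ A}) = Nat.factorial A.card := by
      rw [Fintype.card_equiv ((Fintype.equivFinOfCardEq (Fintype.card_coe A)).symm)]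
      simp
    have h2 : Fintype.card (Fin Aᶜ.card ≃ {x // x ∈ Aᶜ}) = Nat.factorial (k - A.card) := by
      rw [Fintype.card_equiv ((Fintype.equivFinOfCardEq (Fintype.card_coe Aᶜ)).symm)]
      simp [Finset.card_compl]
    rw [h1, h2]
  rw [Fintype.card_sigma]
  calc ∑ A : Finset (Fin k),
        Fintype.card ((Fin A.card ≃ {x // x ∈ A}) × (Fin Aᶜ.card ≃ {x // x ∈ Aᶜ}))
      = ∑ A : Finset (Fin k), Nat.factorial A.card * Nat.factorial (k - A.card) := by
        exact Finset.sum_congr rfl (fun A _ => step A)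
    _ = ∑ A ∈ (Finset.univ : Finset (Fin k)).powerset,
          Nat.factorial A.card * Nat.factorial (k - A.card) := by
        rw [Finset.powerset_univ]
    _ = ∑ j ∈ Finset.range ((Finset.univ : Finset (Fin k)).card + 1),
          ∑ A ∈ Finset.powersetCard j (Finset.univ : Finset (Fin k)),
            Nat.factorial A.card * Nat.factorial (k - A.card) := by
        rw [Finset.sum_powerset]
    _ = (k + 1) * Nat.factorial k := by
        rw [Finset.card_univ, Fintype.card_fin]
        have : ∀ j ∈ Finset.range (k + 1),
            (∑ A ∈ Finset.powersetCard j (Finset.univ : Finset (Fin k)),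
              Nat.factorial A.card * Nat.factorial (k - A.card)) = Nat.factorial k := by
          intro j hj
          have hjk : j ≤ k := Nat.lt_succ_iff.mp (Finset.mem_range.mp hj)
          rw [Finset.sum_congr rfl (fun A hA => by
            rw [(Finset.mem_powersetCard.mp hA).2])]
          rw [Finset.sum_const, Finset.card_powersetCard, Finset.card_univ, Fintype.card_fin,
            smul_eq_mul]
          rw [← Nat.choose_mul_factorial_mul_factorial hjk, Nat.mul_assoc]
        rw [Finset.sum_congr rfl this, Finset.sum_const, Finset.card_range, smul_eq_mul]
    
lemma Fmap_bijective : Function.Bijective (Fmap k) := by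
  rw [Fintype.bijective_iff_injective_and_card]
  refine ⟨Fmap_injective k, ?_⟩
  rw [card_Lam, Fintype.card_prod, Fintype.card_fin, Fintype.card_perm, Fintype.card_fin]

def Phi : Lam k ≃ Fin (k + 1) × Equiv.Perm (Fin k) :=
  Equiv.ofBijective _ (Fmap_bijective k)

end Phi

section Main

variable (K : Type*) [Field K] {k : ℕ}
  (V : Fin k → Type*) [∀ i, AddCommGroup (V i)] [∀ i, Module K (V i)]

variable {A : Finset (Fin k)} in
/-- summand equivalence -/
def summandEquiv (e : Fin A.card ≃ {x // x ∈ A}) (f : Fin Aᶜ.card ≃ {x // x ∈ Aᶜ}) :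
    ((⨂[K] j : Fin A.card, V (e j).1) ⊗[K] (⨂[K] j : Fin Aᶜ.card, V (f j).1))
      ≃ₗ[K] ⨂[K] i : Fin k, V (sigmaAEF e f i) :=
  (depTmulEquiv (R := K) (fun s => V (cA A ((e.sumCongr f) s)))).trans
    (PiTensorProduct.reindex K (fun s => V (cA A ((e.sumCongr f) s))) (gA A))


end Main
end

theorem cauchy_tensor_concatenation_fiber (K : Type*) [Field K] (k : ℕ)
    (V : Fin k → Type*) [∀ i, AddCommGroup (V i)] [∀ i, Module K (V i)] :
    Nonempty
      ((⨁ A : Finset (Fin k),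
          ((⨁ e : Fin A.card ≃ {x // x ∈ A}, ⨂[K] j : Fin A.card, V (e j).1) ⊗[K]
            (⨁ e : Fin Aᶜ.card ≃ {x // x ∈ Aᶜ}, ⨂[K] j : Fin Aᶜ.card, V (e j).1)))
        ≃ₗ[K]
        (Fin (k + 1) → ⨁ σ : Equiv.Perm (Fin k), ⨂[K] i : Fin k, V (σ i))) := by
  refine ⟨
    (DFinsupp.mapRange.linearEquiv (fun A : Finset (Fin k) =>
      TensorProduct.directSum K K
        (fun e : Fin A.card ≃ {x // x ∈ A} => ⨂[K] j : Fin A.card, V (e j).1)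
        (fun f : Fin Aᶜ.card ≃ {x // x ∈ Aᶜ} => ⨂[K] j : Fin Aᶜ.card, V (f j).1)))
    ≪≫ₗ
    (DirectSum.sigmaLcurryEquiv (R := K)
      (δ := fun (A : Finset (Fin k))
          (p : (Fin A.card ≃ {x // x ∈ A}) × (Fin Aᶜ.card ≃ {x // x ∈ Aᶜ})) =>
        (⨂[K] j : Fin A.card, V (p.1 j).1) ⊗[K] (⨂[K] j : Fin Aᶜ.card, V (p.2 j).1))).symm
    ≪≫ₗ
    (dsCongr (R := K) (Phi k)
      (N := fun p : Fin (k + 1) × Equiv.Perm (Fin k) => ⨂[K] i : Fin k, V (p.2 i))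
      (fun q => summandEquiv K V q.2.1 q.2.2))
    ≪≫ₗ
    (DirectSum.lequivCongrLeft K
      (M := fun p : Fin (k + 1) × Equiv.Perm (Fin k) => ⨂[K] i : Fin k, V (p.2 i))
      (Equiv.sigmaEquivProd (Fin (k + 1)) (Equiv.Perm (Fin k))).symm)
    ≪≫ₗ
    (DirectSum.sigmaLcurryEquiv (R := K)
      (δ := fun (_ : Fin (k + 1)) (σ : Equiv.Perm (Fin k)) => ⨂[K] i : Fin k, V (σ i)))
    ≪≫ₗ
    (DirectSum.linearEquivFunOnFintype K (Fin (k + 1))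
      (fun _ => ⨁ σ : Equiv.Perm (Fin k), ⨂[K] i : Fin k, V (σ i)))⟩
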